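/- Let d ≥ 1, let k : ℝ^d × ℝ^d → [0,∞) be measurable, set Σ(v) = ∫_{ℝ^d} k(w,v) dw (integration over the first argument), and assume there exists Σ_max > 0 with Σ(v) ≤ Σ_max for almost every v. Then for every real α ≠ 0 and every φ ∈ L¹(ℝ^d; ℂ), ∫_{ℝ^d} | ∫_{ℝ^d} k(v,w) (iα + Σ(w))^{-1} φ(w) dw | dv ≤ (Σ_max / √(α² + Σ_max²)) ∫_{ℝ^d} |φ(w)| dw. -/

import Mathlib

open MeasureTheory Real Set Filter ENNReal

noncomputable section

abbrev Euc (d : ℕ) := EuclideanSpace ℝ (Fin d)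

lemma gain_mono_aux (α M s : ℝ) (hα : α ≠ 0) (hs : 0 ≤ s) (hM : s ≤ M) :
    s / Real.sqrt (α ^ 2 + s ^ 2) ≤ M / Real.sqrt (α ^ 2 + M ^ 2) := by
  have hα2 : 0 < α ^ 2 := by positivity
  have h1 : 0 < Real.sqrt (α ^ 2 + s ^ 2) := Real.sqrt_pos.2 (by positivity)
  have h2 : 0 < Real.sqrt (α ^ 2 + M ^ 2) := Real.sqrt_pos.2 (by positivity)
  rw [div_le_div_iff₀ h1 h2]
  have hs1 : s * Real.sqrt (α ^ 2 + M ^ 2) = Real.sqrt (s ^ 2 * (α ^ 2 + M ^ 2)) := by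
    rw [Real.sqrt_mul (by positivity), Real.sqrt_sq hs]
  have hs2 : M * Real.sqrt (α ^ 2 + s ^ 2) = Real.sqrt (M ^ 2 * (α ^ 2 + s ^ 2)) := by
    rw [Real.sqrt_mul (by positivity), Real.sqrt_sq (hs.trans hM)]
  rw [hs1, hs2]
  apply Real.sqrt_le_sqrt
  nlinarith [sq_nonneg α, mul_self_le_mul_self hs hM]

lemma gain_abs_aux (α s : ℝ) :
    ‖(Complex.I * (α : ℂ) + (s : ℂ))‖ = Real.sqrt (α ^ 2 + s ^ 2) := by
  rw [Complex.norm_def, Complex.normSq_apply]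
  have hre : (Complex.I * (α : ℂ) + (s : ℂ)).re = s := by simp
  have him : (Complex.I * (α : ℂ) + (s : ℂ)).im = α := by simp
  rw [hre, him]
  ring_nf

/-- The key resolvent estimate `‖K R(iα, T)‖ ≤ Σ_max/√(α² + Σ_max²)` on `L¹(ℝ^d; ℂ)`. -/
theorem gain_resolvent_estimate
    (d : ℕ) (hd : 1 ≤ d) (k : Euc d → Euc d → ℝ)
    (hk : Measurable (Function.uncurry k)) (hkpos : ∀ v w, 0 ≤ k v w)
    (Sig : Euc d → ℝ) (hSigmeas : Measurable Sig) (hSigpos : ∀ v, 0 ≤ Sig v)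
    (hSig : ∀ v : Euc d, ∫⁻ w : Euc d, ENNReal.ofReal (k w v) = ENNReal.ofReal (Sig v))
    (Smax : ℝ) (hSmax : 0 < Smax) (hSigle : ∀ᵐ v : Euc d ∂volume, Sig v ≤ Smax) :
    ∀ α : ℝ, α ≠ 0 → ∀ φ : Euc d → ℂ, Integrable φ →
      ∫ v : Euc d, ‖∫ w : Euc d, (k v w : ℂ) / (Complex.I * (α : ℂ) + (Sig w : ℂ)) * φ w‖
        ≤ (Smax / Real.sqrt (α ^ 2 + Smax ^ 2)) * ∫ w : Euc d, ‖φ w‖ := by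
  intro α hα φ hφ
  set r : ℝ := Smax / Real.sqrt (α ^ 2 + Smax ^ 2) with hr_def
  have hr : 0 ≤ r := by positivity
  set c : Euc d → Euc d → ℂ :=
    fun v w => (k v w : ℂ) / (Complex.I * (α : ℂ) + (Sig w : ℂ)) * φ w with hc_def
  -- measurability of the product integrand
  have hcm : AEStronglyMeasurable (fun p : Euc d × Euc d => c p.1 p.2)
      (volume.prod volume) := by
    apply AEStronglyMeasurable.mul
    · apply Measurable.aestronglyMeasurable
      apply Measurable.div
      · exact Complex.measurable_ofReal.comp hk
      · exact measurable_const.add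
          ((Complex.measurable_ofReal.comp hSigmeas).comp measurable_snd)
    · exact hφ.1.comp_snd
  have hFmeas : AEStronglyMeasurable (fun v => ∫ w, c v w) volume :=
    hcm.integral_prod_right'
  -- the norm of denominator
  have habs : ∀ w, ‖(Complex.I * (α : ℂ) + (Sig w : ℂ))‖ = Real.sqrt (α ^ 2 + Sig w ^ 2) :=
    fun w => gain_abs_aux α (Sig w)
  have hsqrtpos : ∀ w : Euc d, 0 < Real.sqrt (α ^ 2 + Sig w ^ 2) := fun w =>
    Real.sqrt_pos.2 (by have := sq_nonneg (Sig w); positivity)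
  -- pointwise norm identity
  have hnorm : ∀ v w, (‖c v w‖₊ : ℝ≥0∞)
      = ENNReal.ofReal (k v w) * ENNReal.ofReal (‖φ w‖ / Real.sqrt (α ^ 2 + Sig w ^ 2)) := by
    intro v w
    rw [← enorm_eq_nnnorm, ← ofReal_norm]
    have : ‖c v w‖ = k v w * (‖φ w‖ / Real.sqrt (α ^ 2 + Sig w ^ 2)) := by
      rw [hc_def]
      simp only [norm_mul, norm_div, Complex.norm_real, habs w,
        Real.norm_eq_abs, abs_of_nonneg (hkpos v w)]
      ring
    rw [this, ENNReal.ofReal_mul (hkpos v w)]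
  calc
    ∫ v : Euc d, ‖∫ w : Euc d, c v w‖
        = (∫⁻ v : Euc d, (‖∫ w : Euc d, c v w‖₊ : ℝ≥0∞)).toReal := by
          rw [integral_eq_lintegral_of_nonneg_ae (ae_of_all _ fun v => norm_nonneg _)
            hFmeas.norm]
          congr 1
          apply lintegral_congr
          intro v
          rw [ofReal_norm, enorm_eq_nnnorm]
    _ ≤ r * ∫ w : Euc d, ‖φ w‖ := by
      apply ENNReal.toReal_le_of_le_ofReal
      · positivity
      calc
        ∫⁻ v : Euc d, (‖∫ w : Euc d, c v w‖₊ : ℝ≥0∞)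
            ≤ ∫⁻ v : Euc d, ∫⁻ w : Euc d, (‖c v w‖₊ : ℝ≥0∞) :=
          lintegral_mono fun v => enorm_integral_le_lintegral_enorm _
        _ = ∫⁻ w : Euc d, ∫⁻ v : Euc d, (‖c v w‖₊ : ℝ≥0∞) :=
          lintegral_lintegral_swap hcm.enorm
        _ = ∫⁻ w : Euc d, ENNReal.ofReal (Sig w)
              * ENNReal.ofReal (‖φ w‖ / Real.sqrt (α ^ 2 + Sig w ^ 2)) := by
          apply lintegral_congr
          intro w
          simp only [hnorm]
          rw [lintegral_mul_const' _ _ (by simp), hSig w]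
        _ ≤ ∫⁻ w : Euc d, ENNReal.ofReal r * (‖φ w‖₊ : ℝ≥0∞) := by
          apply lintegral_mono_ae
          filter_upwards [hSigle] with w hw
          have h1 : ENNReal.ofReal (Sig w)
              * ENNReal.ofReal (‖φ w‖ / Real.sqrt (α ^ 2 + Sig w ^ 2))
              = ENNReal.ofReal (Sig w / Real.sqrt (α ^ 2 + Sig w ^ 2))
                * ENNReal.ofReal ‖φ w‖ := by
            rw [← ENNReal.ofReal_mul (hSigpos w), ← ENNReal.ofReal_mul (div_nonneg (hSigpos w) (Real.sqrt_nonneg _))]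
            congr 1
            ring
          rw [h1, ← enorm_eq_nnnorm, ← ofReal_norm]
          exact mul_le_mul_left
            (ENNReal.ofReal_le_ofReal (gain_mono_aux α Smax (Sig w) hα (hSigpos w) hw)) _
        _ = ENNReal.ofReal r * ∫⁻ w : Euc d, (‖φ w‖₊ : ℝ≥0∞) :=
          lintegral_const_mul' _ _ (by simp)
        _ = ENNReal.ofReal (r * ∫ w : Euc d, ‖φ w‖) := by
          rw [ENNReal.ofReal_mul hr]; exact congrArg _ (ofReal_integral_norm_eq_lintegral_enorm hφ).symm

end
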